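/- Let S ⊂ ℝ^d be a finite set and suppose the polyhedron P(S) = {w ∈ ℝ^d : ⟨δ, w⟩ ≥ 2 for all δ ∈ S} is nonempty; let w*(S) denote the unique minimum-Euclidean-norm element of P(S). Then there exists a subset S' ⊆ S with |S'| ≤ d + 1 such that w*(S') = w*(S); that is, the maximum-margin solution is determined by at most d + 1 of the constraints. -/

import Mathlib

open RealInnerProductSpace
open scoped Classical

section Aux

variable {d : ℕ}

/-- The cone generated by a finite set with nonnegative coefficients. -/
def coneOf (A : Finset (EuclideanSpace ℝ (Fin d))) : Set (EuclideanSpace ℝ (Fin d)) :=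
  {x | ∃ c : EuclideanSpace ℝ (Fin d) → ℝ,
    (∀ δ ∈ A, 0 ≤ c δ) ∧ x = ∑ δ ∈ A, c δ • δ}

lemma coneOf_mono {A B : Finset (EuclideanSpace ℝ (Fin d))} (h : A ⊆ B) :
    coneOf A ⊆ coneOf B := by
  rintro x ⟨c, hc, rfl⟩
  refine ⟨fun δ => if δ ∈ A then c δ else 0, ?_, ?_⟩
  · intro δ _
    by_cases hδ : δ ∈ A
    · simpa [hδ] using hc δ hδ
    · simp [hδ]
  rw [← Finset.sum_subset h]
  · exact Finset.sum_congr rfl fun δ hδ => by simp [hδ]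
  · intro δ _ hδ; simp [hδ]

lemma exchange {A : Finset (EuclideanSpace ℝ (Fin d))} {x : EuclideanSpace ℝ (Fin d)}
    (hx : x ∈ coneOf A)
    (h : ¬ LinearIndependent ℝ ((↑) : A → EuclideanSpace ℝ (Fin d))) :
    ∃ δ ∈ A, x ∈ coneOf (A.erase δ) := by
  classical
  obtain ⟨c, hc, rfl⟩ := hx
  obtain ⟨g, hg0, i, hgi⟩ := Fintype.not_linearIndependent_iff.mp h
  set G : EuclideanSpace ℝ (Fin d) → ℝ := fun δ => if h : δ ∈ A then g ⟨δ, h⟩ else 0 with hG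
  have hGsum : ∑ δ ∈ A, G δ • δ = 0 := by
    rw [← Finset.sum_coe_sort A (fun δ => G δ • δ)]
    rw [← hg0]
    exact Finset.sum_congr rfl fun b _ => by simp [hG, b.2]
  have key : ∀ G' : EuclideanSpace ℝ (Fin d) → ℝ, (∑ δ ∈ A, G' δ • δ = 0) →
      (∃ δ ∈ A, 0 < G' δ) →
      ∃ δ ∈ A, (∑ δ ∈ A, c δ • δ) ∈ coneOf (A.erase δ) := by
    intro G' hsum ⟨δ₁, hδ₁A, hδ₁⟩
    set T := A.filter (fun δ => 0 < G' δ) with hT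
    have hTne : T.Nonempty := ⟨δ₁, by simp [hT, hδ₁A, hδ₁]⟩
    obtain ⟨e, heT, hmin⟩ := Finset.exists_min_image T (fun δ => c δ / G' δ) hTne
    have heA : e ∈ A := (Finset.mem_filter.mp heT).1
    have hepos : 0 < G' e := (Finset.mem_filter.mp heT).2
    set t := c e / G' e with ht
    have htnn : 0 ≤ t := div_nonneg (hc _ heA) hepos.le
    refine ⟨e, heA, fun δ => c δ - t * G' δ, ?_, ?_⟩
    · intro δ hδ
      dsimp only
      have hδA : δ ∈ A := Finset.mem_of_mem_erase hδ
      by_cases hpos : 0 < G' δ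
      · have : t ≤ c δ / G' δ := hmin δ (Finset.mem_filter.mpr ⟨hδA, hpos⟩)
        rw [le_div_iff₀ hpos] at this
        linarith
      · push_neg at hpos
        nlinarith [hc δ hδA, mul_nonneg htnn (neg_nonneg.mpr hpos)]
    · have hzero : c e - t * G' e = 0 := by
        rw [ht, div_mul_cancel₀ _ hepos.ne', sub_self]
      rw [Finset.sum_erase _ (by dsimp only; rw [hzero, zero_smul])]
      have : ∑ δ ∈ A, (c δ - t * G' δ) • δ
          = (∑ δ ∈ A, c δ • δ) - t • ∑ δ ∈ A, G' δ • δ := by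
        rw [Finset.smul_sum, ← Finset.sum_sub_distrib]
        exact Finset.sum_congr rfl fun δ _ => by rw [sub_smul, smul_smul]
      rw [this, hsum, smul_zero, sub_zero]
  rcases lt_or_gt_of_ne hgi with hneg | hpos
  · refine key (fun δ => -G δ) ?_ ⟨↑i, i.2, ?_⟩
    · simp only [neg_smul, Finset.sum_neg_distrib, hGsum, neg_zero]
    · simp only [hG, i.2, dif_pos, neg_pos]
      simpa using hneg
  · exact key G hGsum ⟨↑i, i.2, by simp only [hG, i.2, dif_pos]; simpa using hpos⟩

lemma reduce {A : Finset (EuclideanSpace ℝ (Fin d))} :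
    ∀ x ∈ coneOf A, ∃ B ⊆ A,
      LinearIndependent ℝ ((↑) : B → EuclideanSpace ℝ (Fin d)) ∧ x ∈ coneOf B := by
  induction A using Finset.strongInductionOn with
  | _ A ih =>
    intro x hx
    by_cases h : LinearIndependent ℝ ((↑) : A → EuclideanSpace ℝ (Fin d))
    · exact ⟨A, subset_rfl, h, hx⟩
    · obtain ⟨δ, hδ, hx'⟩ := exchange hx h
      obtain ⟨B, hBA, hB, hxB⟩ := ih (A.erase δ) (Finset.erase_ssubset hδ) x hx'
      exact ⟨B, hBA.trans (Finset.erase_subset _ _), hB, hxB⟩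

lemma isClosed_coneOf_of_li {B : Finset (EuclideanSpace ℝ (Fin d))}
    (h : LinearIndependent ℝ ((↑) : B → EuclideanSpace ℝ (Fin d))) :
    IsClosed (coneOf B) := by
  let T : (↥B → ℝ) →ₗ[ℝ] EuclideanSpace ℝ (Fin d) :=
    { toFun := fun f => ∑ b : ↥B, f b • (b : EuclideanSpace ℝ (Fin d))
      map_add' := fun f g => by simp [add_smul, Finset.sum_add_distrib]
      map_smul' := fun r f => by simp [smul_smul, Finset.smul_sum]
      }
  have hker : LinearMap.ker T = ⊥ := by
    rw [LinearMap.ker_eq_bot']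
    intro f hf
    exact funext (Fintype.linearIndependent_iff.mp h f hf)
  have hemb := LinearMap.isClosedEmbedding_of_injective hker
  have himg : coneOf B = T '' {f | ∀ b, 0 ≤ f b} := by
    ext x
    constructor
    · rintro ⟨c, hc, rfl⟩
      refine ⟨fun b => c ↑b, fun b => hc _ b.2, ?_⟩
      exact (Finset.sum_coe_sort B (fun δ => c δ • δ))
    · rintro ⟨f, hf, rfl⟩
      refine ⟨fun δ => if h : δ ∈ B then f ⟨δ, h⟩ else 0, ?_, ?_⟩
      · intro δ hδ; simp [hδ, hf ⟨δ, hδ⟩]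
      · rw [← Finset.sum_coe_sort B]
        exact (Finset.sum_congr rfl fun b _ => by simp [b.2]).symm
  rw [himg]
  refine hemb.isClosedMap _ ?_
  have : {f : ↥B → ℝ | ∀ b, 0 ≤ f b} = ⋂ b, {f | 0 ≤ f b} := by
    ext f; simp [Set.mem_iInter]
  rw [this]
  exact isClosed_iInter fun b => isClosed_le continuous_const (continuous_apply b)

lemma isClosed_coneOf (A : Finset (EuclideanSpace ℝ (Fin d))) : IsClosed (coneOf A) := by
  have : coneOf A = ⋃ B ∈ {B : Finset (EuclideanSpace ℝ (Fin d)) |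
      B ⊆ A ∧ LinearIndependent ℝ ((↑) : B → EuclideanSpace ℝ (Fin d))}, coneOf B := by
    ext x
    simp only [Set.mem_iUnion, Set.mem_setOf_eq]
    constructor
    · intro hx
      obtain ⟨B, hBA, hB, hxB⟩ := reduce x hx
      exact ⟨B, ⟨hBA, hB⟩, hxB⟩
    · rintro ⟨B, ⟨hBA, -⟩, hxB⟩
      exact coneOf_mono hBA hxB
  rw [this]
  refine Set.Finite.isClosed_biUnion ?_ fun B hB => isClosed_coneOf_of_li hB.2
  exact (A.powerset.finite_toSet).subset fun B hB => by
    simpa using hB.1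

lemma minimizer_eq {K : Set (EuclideanSpace ℝ (Fin d))} (hK : Convex ℝ K)
    {a b : EuclideanSpace ℝ (Fin d)}
    (ha : a ∈ K) (ham : ∀ u ∈ K, ‖a‖ ≤ ‖u‖) (hb : b ∈ K) (hbm : ∀ u ∈ K, ‖b‖ ≤ ‖u‖) :
    a = b := by
  have hab : ‖a‖ = ‖b‖ := le_antisymm (ham b hb) (hbm a ha)
  have hmid : (1/2:ℝ) • a + (1/2:ℝ) • b ∈ K :=
    hK ha hb (by norm_num) (by norm_num) (by norm_num)
  have h1 : ‖a‖ ≤ ‖(1/2:ℝ) • a + (1/2:ℝ) • b‖ := ham _ hmid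
  have h3 : ‖(1/2:ℝ) • a + (1/2:ℝ) • b‖ = (1/2) * ‖a + b‖ := by
    rw [← smul_add, norm_smul]; simp
  have hpar := parallelogram_law_with_norm ℝ a b
  have h5 : ‖a - b‖ = 0 := by
    refine le_antisymm ?_ (norm_nonneg _)
    nlinarith [norm_nonneg (a + b), norm_nonneg a]
  rwa [norm_eq_zero, sub_eq_zero] at h5

end Aux

/-- The polyhedron `P(S) = {w : ⟨δ, w⟩ ≥ 2 for all δ ∈ S}`. -/
def constraintPolyhedron {d : ℕ} (S : Finset (EuclideanSpace ℝ (Fin d))) :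
    Set (EuclideanSpace ℝ (Fin d)) :=
  {w | ∀ δ ∈ S, 2 ≤ ⟪δ, w⟫}

section PolyLemmas

variable {d : ℕ}

lemma poly_convex (S : Finset (EuclideanSpace ℝ (Fin d))) :
    Convex ℝ (constraintPolyhedron S) := by
  intro x hx y hy a b ha hb hab δ hδ
  have h1 := hx δ hδ
  have h2 := hy δ hδ
  have : ⟪δ, a • x + b • y⟫ = a * ⟪δ, x⟫ + b * ⟪δ, y⟫ := by
    rw [inner_add_right, real_inner_smul_right, real_inner_smul_right]
  rw [this]
  nlinarith

lemma poly_closed (S : Finset (EuclideanSpace ℝ (Fin d))) :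
    IsClosed (constraintPolyhedron S) := by
  have : constraintPolyhedron S = ⋂ δ ∈ (S : Set (EuclideanSpace ℝ (Fin d))),
      {w | 2 ≤ ⟪δ, w⟫} := by
    ext w; simp [constraintPolyhedron]
  rw [this]
  exact isClosed_biInter fun δ _ =>
    isClosed_le continuous_const (Continuous.inner continuous_const continuous_id)

end PolyLemmas

/-- The maximum-margin solution is determined by at most `d + 1` constraints: if the polyhedron
`P(S) = {w : ⟨δ, w⟩ ≥ 2, δ ∈ S}` is nonempty, there is `S' ⊆ S` with `|S'| ≤ d + 1` such that
the minimum-norm element of `P(S')` equals the minimum-norm element of `P(S)`. -/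
theorem minNorm_determined_by_few_constraints
    (d : ℕ) (S : Finset (EuclideanSpace ℝ (Fin d)))
    (hne : (constraintPolyhedron S).Nonempty) :
    ∃ S' ⊆ S, S'.card ≤ d + 1 ∧
      ∀ w' w : EuclideanSpace ℝ (Fin d),
        (w' ∈ constraintPolyhedron S' ∧ ∀ u ∈ constraintPolyhedron S', ‖w'‖ ≤ ‖u‖) →
        (w ∈ constraintPolyhedron S ∧ ∀ u ∈ constraintPolyhedron S, ‖w‖ ≤ ‖u‖) →
        w' = w := by
  classical
  obtain ⟨w₀, hw₀K, hmininf⟩ :=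
    exists_norm_eq_iInf_of_complete_convex hne (poly_closed S).isComplete (poly_convex S) 0
  have hw₀min : ∀ u ∈ constraintPolyhedron S, ‖w₀‖ ≤ ‖u‖ := by
    intro u hu
    have hb : BddBelow (Set.range fun w : constraintPolyhedron S =>
        ‖(0 : EuclideanSpace ℝ (Fin d)) - ↑w‖) :=
      ⟨0, by rintro x ⟨i, rfl⟩; exact norm_nonneg _⟩
    have h := ciInf_le hb (⟨u, hu⟩ : constraintPolyhedron S)
    rw [← hmininf] at h
    simpa using h
  set A := S.filter (fun δ => ⟪δ, w₀⟫ ≤ 2) with hA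
  have hAS : A ⊆ S := Finset.filter_subset _ _
  have hactive : ∀ δ ∈ A, ⟪δ, w₀⟫ = 2 := fun δ hδ =>
    le_antisymm (Finset.mem_filter.mp hδ).2 (hw₀K δ (hAS hδ))
  have hinactive : ∀ δ ∈ S, δ ∉ A → 2 < ⟪δ, w₀⟫ := by
    intro δ hδ hδA
    rcases lt_or_ge 2 ⟪δ, w₀⟫ with h | h
    · exact h
    · exact absurd (Finset.mem_filter.mpr ⟨hδ, h⟩) hδA
  have hw₀cone : w₀ ∈ coneOf A := by
    by_contra hnot
    set K : ConvexCone ℝ (EuclideanSpace ℝ (Fin d)) :=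
      { carrier := coneOf A
        smul_mem' := by
          rintro r hr x ⟨c, hc, rfl⟩
          refine ⟨fun δ => r * c δ, fun δ hδ => mul_nonneg hr.le (hc δ hδ), ?_⟩
          rw [Finset.smul_sum]
          exact Finset.sum_congr rfl fun δ _ => (smul_smul r (c δ) δ)
        add_mem' := by
          rintro x ⟨c1, hc1, rfl⟩ y ⟨c2, hc2, rfl⟩
          refine ⟨fun δ => c1 δ + c2 δ, fun δ hδ => add_nonneg (hc1 δ hδ) (hc2 δ hδ), ?_⟩
          rw [← Finset.sum_add_distrib]
          exact Finset.sum_congr rfl fun δ _ => (add_smul _ _ _).symm } with hK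
    have hKne : (K : Set (EuclideanSpace ℝ (Fin d))).Nonempty :=
      ⟨0, ⟨fun _ => 0, fun _ _ => le_refl 0, by simp⟩⟩
    obtain ⟨v, hv1, hv2⟩ :=
      ProperCone.hyperplane_separation' (x₀ := w₀)
        ({ carrier := coneOf A
           add_mem' := fun ha hb => K.add_mem' ha hb
           zero_mem' := ⟨fun _ => 0, fun _ _ => le_refl 0, by simp⟩
           smul_mem' := by
             rintro r x ⟨c, hc, rfl⟩
             refine ⟨fun δ => (r:ℝ) * c δ, fun δ hδ => mul_nonneg r.2 (hc δ hδ), ?_⟩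
             change (r:ℝ) • (∑ δ ∈ A, c δ • δ : EuclideanSpace ℝ (Fin d)) = _
             rw [Finset.smul_sum]
             exact Finset.sum_congr rfl fun δ _ => (smul_smul (r:ℝ) (c δ) δ)
           isClosed' := isClosed_coneOf A } : ProperCone ℝ (EuclideanSpace ℝ (Fin d))) hnot
    have hAv : ∀ δ ∈ A, 0 ≤ ⟪δ, v⟫ := by
      intro δ hδ
      refine hv1 δ ⟨fun δ' => if δ' = δ then 1 else 0, ?_, ?_⟩
      · intro δ' _
        dsimp only
        split <;> norm_num
      · have h : ∑ δ' ∈ A, (if δ' = δ then (1:ℝ) else 0) • δ' = δ := by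
          rw [Finset.sum_eq_single δ]
          · simp
          · intro b _ hb; simp [hb]
          · intro hδ'; exact absurd hδ hδ'
        exact h.symm
    have hexp : ∀ (δ : EuclideanSpace ℝ (Fin d)) (t : ℝ),
        ⟪δ, w₀ + t • v⟫ = ⟪δ, w₀⟫ + t * ⟪δ, v⟫ := fun δ t => by
      rw [inner_add_right, real_inner_smul_right]
    have hS : ∀ᶠ t in nhdsWithin (0:ℝ) (Set.Ioi 0), w₀ + t • v ∈ constraintPolyhedron S := by
      have : ∀ δ ∈ S, ∀ᶠ t in nhdsWithin (0:ℝ) (Set.Ioi 0), 2 ≤ ⟪δ, w₀ + t • v⟫ := by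
        intro δ hδ
        by_cases hδA : δ ∈ A
        · refine Filter.eventually_of_mem self_mem_nhdsWithin fun t ht => ?_
          have ht' : (0:ℝ) < t := ht
          rw [hexp, hactive δ hδA]
          nlinarith [mul_nonneg ht'.le (hAv δ hδA)]
        · have hcont : Continuous fun t : ℝ => ⟪δ, w₀⟫ + t * ⟪δ, v⟫ :=
            continuous_const.add (continuous_id.mul continuous_const)
          have htend : Filter.Tendsto (fun t : ℝ => ⟪δ, w₀⟫ + t * ⟪δ, v⟫)
              (nhds 0) (nhds ⟪δ, w₀⟫) := by
            simpa using hcont.tendsto 0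
          have hev := htend.eventually_const_lt (hinactive δ hδ hδA)
          refine (hev.filter_mono nhdsWithin_le_nhds).mono fun t ht => ?_
          rw [hexp]; exact ht.le
      have := (Filter.eventually_all_finset S
        (p := fun δ t => 2 ≤ ⟪δ, w₀ + t • v⟫)).mpr this
      exact this.mono fun t ht δ hδ => ht δ hδ
    have hvw : ⟪w₀, v⟫ < 0 := by exact hv2
    have hnormev : ∀ᶠ t in nhdsWithin (0:ℝ) (Set.Ioi 0), ‖w₀ + t • v‖ < ‖w₀‖ := by
      have hcont : Continuous fun t : ℝ => 2 * ⟪w₀, v⟫ + t * ‖v‖ ^ 2 :=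
          continuous_const.add (continuous_id.mul continuous_const)
      have htend : Filter.Tendsto (fun t : ℝ => 2 * ⟪w₀, v⟫ + t * ‖v‖ ^ 2)
          (nhds 0) (nhds (2 * ⟪w₀, v⟫)) := by simpa using hcont.tendsto 0
      have hev := htend.eventually_lt_const (by linarith : 2 * ⟪w₀, v⟫ < 0)
      filter_upwards [hev.filter_mono nhdsWithin_le_nhds, self_mem_nhdsWithin] with t h2t ht
      have ht' : (0:ℝ) < t := ht
      have hsq : ‖w₀ + t • v‖ ^ 2 < ‖w₀‖ ^ 2 := by
        rw [norm_add_sq_real, real_inner_smul_right, norm_smul, Real.norm_eq_abs,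
          abs_of_pos ht']
        nlinarith [mul_pos ht' ht']
      exact lt_of_pow_lt_pow_left₀ 2 (norm_nonneg _) hsq
    obtain ⟨t, hmem, hlt⟩ := (hS.and hnormev).exists
    exact absurd (hw₀min _ hmem) (not_le.mpr hlt)
  obtain ⟨B, hBA, hBli, hBcone⟩ := reduce w₀ hw₀cone
  have hBS : B ⊆ S := hBA.trans hAS
  refine ⟨B, hBS, ?_, ?_⟩
  · calc B.card ≤ Module.finrank ℝ (EuclideanSpace ℝ (Fin d)) :=
          hBli.finset_card_le_finrank
      _ = d := finrank_euclideanSpace_fin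
      _ ≤ d + 1 := Nat.le_succ d
  · intro w' w hw' hw
    have hw₀B : w₀ ∈ constraintPolyhedron B := fun δ hδ => hw₀K δ (hBS hδ)
    have hw₀Bmin : ∀ u ∈ constraintPolyhedron B, ‖w₀‖ ≤ ‖u‖ := by
      obtain ⟨c, hc, hrep⟩ := hBcone
      intro u hu
      have e1 : ∀ z : EuclideanSpace ℝ (Fin d),
          ⟪w₀, z⟫ = ∑ δ ∈ B, c δ * ⟪δ, z⟫ := by
        intro z
        rw [hrep, sum_inner]
        exact Finset.sum_congr rfl fun δ _ => real_inner_smul_left δ z (c δ)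
      have e2 : ‖w₀‖ ^ 2 = ∑ δ ∈ B, c δ * 2 := by
        rw [← real_inner_self_eq_norm_sq, e1]
        exact Finset.sum_congr rfl fun δ hδ => by rw [hactive δ (hBA hδ)]
      have key : ‖w₀‖ ^ 2 ≤ ⟪w₀, u⟫ := by
        rw [e1, e2]
        exact Finset.sum_le_sum fun δ hδ =>
          mul_le_mul_of_nonneg_left (hu δ hδ) (hc δ hδ)
      have hcs := real_inner_le_norm w₀ u
      nlinarith [norm_nonneg w₀, norm_nonneg u]
    have h1 : w' = w₀ := minimizer_eq (poly_convex B) hw'.1 hw'.2 hw₀B hw₀Bmin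
    have h2 : w = w₀ := minimizer_eq (poly_convex S) hw.1 hw.2 hw₀K hw₀min
    rw [h1, h2]
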